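/- Let U ⊆ ℝ² be open and let η, ζ : U → ℝ be harmonic with η_x² + η_y² > 0 everywhere on U. Then the two functions (η_x ζ_x + η_y ζ_y)/(η_x² + η_y²) and (η_x ζ_y − η_y ζ_x)/(η_x² + η_y²) are harmonic on U. (They are the real and, up to sign, imaginary parts of the holomorphic quotient (ζ_y + iζ_x)/(η_y + iη_x); applied with ζ replaced by ϑ this shows the conformal velocity components and electric field components are harmonic.) -/

import Mathlib

/-- Partial derivative in the first (horizontal) variable. -/
noncomputable def pdx (f : ℝ × ℝ → ℝ) (p : ℝ × ℝ) : ℝ := fderiv ℝ f p (1, 0)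

/-- Partial derivative in the second (vertical) variable. -/
noncomputable def pdy (f : ℝ × ℝ → ℝ) (p : ℝ × ℝ) : ℝ := fderiv ℝ f p (0, 1)

/-- A function is harmonic on an open set if it is twice continuously differentiable
there and its Laplacian `u_xx + u_yy` vanishes. -/
def IsHarmonicOn (f : ℝ × ℝ → ℝ) (U : Set (ℝ × ℝ)) : Prop :=
  ContDiffOn ℝ 2 f U ∧ ∀ p ∈ U, pdx (pdx f) p + pdy (pdy f) p = 0

open Complex ContinuousLinearMap

/-- The continuous linear map `(x, y) ↦ x + y i`. -/
noncomputable def mC : ℝ × ℝ →L[ℝ] ℂ :=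
  ((ContinuousLinearMap.fst ℝ ℝ ℝ).smulRight 1) + ((ContinuousLinearMap.snd ℝ ℝ ℝ).smulRight I)

@[simp] lemma mC_apply (p : ℝ × ℝ) : mC p = ⟨p.1, p.2⟩ := by
  simp [mC, Complex.ext_iff]

/-- The continuous linear map `z ↦ (re z, im z)`. -/
noncomputable def eC : ℂ →L[ℝ] ℝ × ℝ := Complex.reCLM.prod Complex.imCLM

@[simp] lemma eC_apply (z : ℂ) : eC z = (z.re, z.im) := rfl

@[simp] lemma eC_mC (p : ℝ × ℝ) : eC (mC p) = p := by simp

lemma pdx_congr {f g : ℝ × ℝ → ℝ} {p : ℝ × ℝ} (h : f =ᶠ[nhds p] g) : pdx f p = pdx g p := by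
  unfold pdx; rw [h.fderiv_eq]

lemma pdy_congr {f g : ℝ × ℝ → ℝ} {p : ℝ × ℝ} (h : f =ᶠ[nhds p] g) : pdy f p = pdy g p := by
  unfold pdy; rw [h.fderiv_eq]

/-- Harmonicity only depends on the values on the (open) set. -/
lemma isHarmonicOn_congr {U : Set (ℝ × ℝ)} (hU : IsOpen U) {f g : ℝ × ℝ → ℝ}
    (h : ∀ p ∈ U, f p = g p) (hg : IsHarmonicOn g U) : IsHarmonicOn f U := by
  have hev : ∀ p ∈ U, f =ᶠ[nhds p] g := fun p hp =>
    Filter.eventually_of_mem (hU.mem_nhds hp) (fun q hq => h q hq)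
  refine ⟨hg.1.congr h, fun p hp => ?_⟩
  have hx : pdx f =ᶠ[nhds p] pdx g :=
    Filter.eventually_of_mem (hU.mem_nhds hp) (fun q hq => pdx_congr (hev q hq))
  have hy : pdy f =ᶠ[nhds p] pdy g :=
    Filter.eventually_of_mem (hU.mem_nhds hp) (fun q hq => pdy_congr (hev q hq))
  rw [pdx_congr hx, pdy_congr hy]
  exact hg.2 p hp

/-- Partial derivatives of real and imaginary parts of a holomorphic function. -/
lemma pd_re_im {w : ℂ → ℂ} {p : ℝ × ℝ} (hw : DifferentiableAt ℂ w (mC p)) :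
    pdx (fun q => (w (mC q)).re) p = (deriv w (mC p)).re ∧
    pdy (fun q => (w (mC q)).re) p = -(deriv w (mC p)).im ∧
    pdx (fun q => (w (mC q)).im) p = (deriv w (mC p)).im ∧
    pdy (fun q => (w (mC q)).im) p = (deriv w (mC p)).re := by
  set c := deriv w (mC p) with hc
  have h0 : HasFDerivAt w ((ContinuousLinearMap.smulRight (1 : ℂ →L[ℂ] ℂ) c).restrictScalars ℝ)
      (mC p) := (hw.hasDerivAt.hasFDerivAt).restrictScalars ℝ
  have h1 : HasFDerivAt (fun q => w (mC q))
      (((ContinuousLinearMap.smulRight (1 : ℂ →L[ℂ] ℂ) c).restrictScalars ℝ).comp mC) p :=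
    h0.comp p (mC.hasFDerivAt)
  have hre : HasFDerivAt (fun q => (w (mC q)).re)
      (Complex.reCLM.comp (((ContinuousLinearMap.smulRight (1 : ℂ →L[ℂ] ℂ) c).restrictScalars
        ℝ).comp mC)) p := (Complex.reCLM.hasFDerivAt.comp p h1)
  have him : HasFDerivAt (fun q => (w (mC q)).im)
      (Complex.imCLM.comp (((ContinuousLinearMap.smulRight (1 : ℂ →L[ℂ] ℂ) c).restrictScalars
        ℝ).comp mC)) p := (Complex.imCLM.hasFDerivAt.comp p h1)
  have e1 : mC ((1:ℝ), (0:ℝ)) = 1 := by simp [Complex.ext_iff]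
  have e2 : mC ((0:ℝ), (1:ℝ)) = I := by simp [Complex.ext_iff]
  refine ⟨?_, ?_, ?_, ?_⟩
  · show fderiv ℝ _ p (1,0) = _
    rw [hre.fderiv]; simp [e1]
  · show fderiv ℝ _ p (0,1) = _
    rw [hre.fderiv]; simp [e2, Complex.I_mul_re]
  · show fderiv ℝ _ p (1,0) = _
    rw [him.fderiv]; simp [e1]
  · show fderiv ℝ _ p (0,1) = _
    rw [him.fderiv]; simp [e2, Complex.I_mul_im]

/-- Real and imaginary parts of a holomorphic function are harmonic. -/
lemma key {V : Set ℂ} (hV : IsOpen V) {w : ℂ → ℂ} (hw : DifferentiableOn ℂ w V) :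
    IsHarmonicOn (fun p => (w (mC p)).re) (mC ⁻¹' V) ∧
    IsHarmonicOn (fun p => (w (mC p)).im) (mC ⁻¹' V) := by
  have hU' : IsOpen (mC ⁻¹' V) := hV.preimage mC.continuous
  have hA : AnalyticOnNhd ℂ w V := hw.analyticOnNhd hV
  have hw' : DifferentiableOn ℂ (deriv w) V := (hA.deriv).differentiableOn
  have hsm : ∀ u : ℂ → ℂ, DifferentiableOn ℂ u V →
      ContDiffOn ℝ 2 (fun p => (u (mC p)).re) (mC ⁻¹' V) ∧
      ContDiffOn ℝ 2 (fun p => (u (mC p)).im) (mC ⁻¹' V) := by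
    intro u hu
    have h2 : ∀ p ∈ mC ⁻¹' V, ContDiffAt ℝ 2 (fun q => u (mC q)) p := by
      intro p hp
      have h1 : ContDiffAt ℂ 2 u (mC p) := ((hu.analyticOnNhd hV) (mC p) hp).contDiffAt
      exact (h1.restrict_scalars ℝ).comp p (mC.contDiff.contDiffAt)
    constructor
    · intro p hp
      exact ((Complex.reCLM.contDiff.contDiffAt.comp p (h2 p hp))).contDiffWithinAt
    · intro p hp
      exact ((Complex.imCLM.contDiff.contDiffAt.comp p (h2 p hp))).contDiffWithinAt
  have hev : ∀ {f g : ℝ × ℝ → ℝ}, (∀ q ∈ mC ⁻¹' V, f q = g q) → ∀ p ∈ mC ⁻¹' V,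
      f =ᶠ[nhds p] g := fun h p hp => Filter.eventually_of_mem (hU'.mem_nhds hp) h
  constructor
  · refine ⟨(hsm w hw).1, fun p hp => ?_⟩
    have e1 : ∀ q ∈ mC ⁻¹' V, pdx (fun q => (w (mC q)).re) q = (fun q => (deriv w (mC q)).re) q :=
      fun q hq => (pd_re_im (hw.differentiableAt (hV.mem_nhds hq))).1
    have e2 : ∀ q ∈ mC ⁻¹' V,
        pdy (fun q => (w (mC q)).re) q = (fun q => -((deriv w (mC q)).im)) q :=
      fun q hq => (pd_re_im (hw.differentiableAt (hV.mem_nhds hq))).2.1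
    have hd' := hw'.differentiableAt (hV.mem_nhds hp)
    rw [pdx_congr (hev e1 p hp), pdy_congr (hev e2 p hp)]
    have w1 := (pd_re_im hd').1
    have hneg : pdy (fun q => -((deriv w (mC q)).im)) p
        = - pdy (fun q => ((deriv w (mC q)).im)) p := by
      unfold pdy
      have : (fun q => -((deriv w (mC q)).im)) = fun q => (-1 : ℝ) * ((deriv w (mC q)).im) := by
        funext q; ring
      rw [this, fderiv_const_mul]; · simp
      · exact (Complex.imCLM.differentiable.differentiableAt).comp p
          ((hd'.restrictScalars ℝ).comp p mC.differentiableAt)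
    rw [hneg, w1, (pd_re_im hd').2.2.2]; ring
  · refine ⟨(hsm w hw).2, fun p hp => ?_⟩
    have e1 : ∀ q ∈ mC ⁻¹' V, pdx (fun q => (w (mC q)).im) q = (fun q => (deriv w (mC q)).im) q :=
      fun q hq => (pd_re_im (hw.differentiableAt (hV.mem_nhds hq))).2.2.1
    have e2 : ∀ q ∈ mC ⁻¹' V,
        pdy (fun q => (w (mC q)).im) q = (fun q => ((deriv w (mC q)).re)) q :=
      fun q hq => (pd_re_im (hw.differentiableAt (hV.mem_nhds hq))).2.2.2
    have hd' := hw'.differentiableAt (hV.mem_nhds hp)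
    rw [pdx_congr (hev e1 p hp), pdy_congr (hev e2 p hp)]
    rw [(pd_re_im hd').2.2.1, (pd_re_im hd').2.1]; ring

/-- The complexified gradient of a harmonic function is holomorphic. -/
lemma holo {U : Set (ℝ × ℝ)} (hU : IsOpen U) {f : ℝ × ℝ → ℝ} (hf : IsHarmonicOn f U) :
    DifferentiableOn ℂ (fun z => mC (pdx f (eC z), -(pdy f (eC z)))) (eC ⁻¹' U) := by
  have hdf : ContDiffOn ℝ 1 (fderiv ℝ f) U := hf.1.fderiv_of_isOpen hU (by norm_num)
  intro z hz
  set p : ℝ × ℝ := eC z with hpdef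
  have hp : p ∈ U := hz
  have hdiff : DifferentiableAt ℝ (fderiv ℝ f) p :=
    ((hdf.differentiableOn one_ne_zero) p hp).differentiableAt (hU.mem_nhds hp)
  set A := fderiv ℝ (fderiv ℝ f) p with hA
  have hAd : HasFDerivAt (fderiv ℝ f) A p := hdiff.hasFDerivAt
  have hLx : HasFDerivAt (pdx f) ((ContinuousLinearMap.apply ℝ ℝ ((1:ℝ),(0:ℝ))).comp A) p :=
    (ContinuousLinearMap.apply ℝ ℝ ((1:ℝ),(0:ℝ))).hasFDerivAt.comp p hAd
  have hLy : HasFDerivAt (pdy f) ((ContinuousLinearMap.apply ℝ ℝ ((0:ℝ),(1:ℝ))).comp A) p :=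
    (ContinuousLinearMap.apply ℝ ℝ ((0:ℝ),(1:ℝ))).hasFDerivAt.comp p hAd
  set Lx := (ContinuousLinearMap.apply ℝ ℝ ((1:ℝ),(0:ℝ))).comp A with hLxdef
  set Ly := (ContinuousLinearMap.apply ℝ ℝ ((0:ℝ),(1:ℝ))).comp A with hLydef
  set M : ℂ →L[ℝ] ℂ := mC.comp (((Lx.comp eC).prod (-(Ly.comp eC)))) with hM
  have hMd : HasFDerivAt (fun z => mC (pdx f (eC z), -(pdy f (eC z)))) M z := by
    exact mC.hasFDerivAt.comp z
      ((HasFDerivAt.prodMk (hLx.comp z eC.hasFDerivAt : HasFDerivAt (pdx f ∘ eC) (Lx.comp eC) z)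
        (HasFDerivAt.neg (hLy.comp z eC.hasFDerivAt : HasFDerivAt (pdy f ∘ eC) (Ly.comp eC) z))))
  have hsymm : A (0,1) (1,0) = A (1,0) (0,1) := by
    have h2 : ContDiffAt ℝ 2 f p := hf.1.contDiffAt (hU.mem_nhds hp)
    exact (h2.isSymmSndFDerivAt (by simp [minSmoothness_of_isRCLikeNormedField])) (0,1) (1,0)
  have hlap : A (1,0) (1,0) + A (0,1) (0,1) = 0 := by
    have := hf.2 p hp
    have e1 : pdx (pdx f) p = A (1,0) (1,0) := by
      show fderiv ℝ (pdx f) p (1,0) = _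
      rw [hLx.fderiv]; rfl
    have e2 : pdy (pdy f) p = A (0,1) (0,1) := by
      show fderiv ℝ (pdy f) p (0,1) = _
      rw [hLy.fderiv]; rfl
    rw [e1, e2] at this; exact this
  set c : ℂ := M 1 with hc
  have hCR : M = (ContinuousLinearMap.smulRight (1 : ℂ →L[ℂ] ℂ) c).restrictScalars ℝ := by
    have hMI : M I = I * c := by
      have h1 : M 1 = ⟨A (1,0) (1,0), -(A (1,0) (0,1))⟩ := by
        simp [hM, Complex.ext_iff, eC, Lx, Ly]
      have h2 : M I = ⟨A (0,1) (1,0), -(A (0,1) (0,1))⟩ := by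
        simp [hM, Complex.ext_iff, eC, Lx, Ly]
      rw [hc, h1, h2, Complex.ext_iff]
      constructor
      · simp only [Complex.mul_re, Complex.I_re, Complex.I_im]
        simp [hsymm]
      · simp only [Complex.mul_im, Complex.I_re, Complex.I_im]
        simp; linarith
    ext v
    have hv : v = (v.re : ℝ) • (1 : ℂ) + (v.im : ℝ) • I := by
      simp [Complex.ext_iff]
    rw [hv]
    simp only [map_add, map_smul, hMI]
    simp [Complex.ext_iff]
    exact Or.inl ⟨rfl, rfl⟩
  have : HasFDerivAt (fun z => mC (pdx f (eC z), -(pdy f (eC z))))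
      (ContinuousLinearMap.smulRight (1 : ℂ →L[ℂ] ℂ) c) z :=
    hasFDerivAt_of_restrictScalars ℝ hMd hCR.symm
  exact this.differentiableAt.differentiableWithinAt

/-- Let `U ⊆ ℝ²` be open and `η, ζ : U → ℝ` harmonic with `η_x² + η_y² > 0` on `U`.
Then `(η_x ζ_x + η_y ζ_y)/(η_x² + η_y²)` and `(η_x ζ_y − η_y ζ_x)/(η_x² + η_y²)` are
harmonic on `U`. -/
theorem stmt_10 (U : Set (ℝ × ℝ)) (hU : IsOpen U) (η ζ : ℝ × ℝ → ℝ)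
    (hη : IsHarmonicOn η U) (hζ : IsHarmonicOn ζ U)
    (hgrad : ∀ p ∈ U, 0 < (pdx η p) ^ 2 + (pdy η p) ^ 2) :
    IsHarmonicOn
      (fun p => (pdx η p * pdx ζ p + pdy η p * pdy ζ p) / ((pdx η p) ^ 2 + (pdy η p) ^ 2)) U ∧
    IsHarmonicOn
      (fun p => (pdx η p * pdy ζ p - pdy η p * pdx ζ p) / ((pdx η p) ^ 2 + (pdy η p) ^ 2)) U := by
  set V : Set ℂ := eC ⁻¹' U with hVdef
  have hV : IsOpen V := hU.preimage eC.continuous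
  set gη : ℂ → ℂ := fun z => mC (pdx η (eC z), -(pdy η (eC z))) with hgη
  set gζ : ℂ → ℂ := fun z => mC (pdx ζ (eC z), -(pdy ζ (eC z))) with hgζ
  have hdη : DifferentiableOn ℂ gη V := holo hU hη
  have hdζ : DifferentiableOn ℂ gζ V := holo hU hζ
  have hne : ∀ z ∈ V, gη z ≠ 0 := by
    intro z hz h0
    have h := hgrad (eC z) hz
    rw [hgη] at h0
    simp only [mC_apply, Complex.ext_iff, Complex.zero_re, Complex.zero_im] at h0
    rw [h0.1, neg_eq_zero.mp h0.2] at h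
    norm_num at h
  set H : ℂ → ℂ := fun z => gζ z / gη z with hH
  have hdH : DifferentiableOn ℂ H V := hdζ.div hdη hne
  have hdnH : DifferentiableOn ℂ (fun z => -(H z)) V := hdH.neg
  have hUeq : mC ⁻¹' V = U := by
    ext p; simp [hVdef]
  have k1 := (key hV hdH).1
  have k2 := (key hV hdnH).2
  rw [hUeq] at k1 k2
  constructor
  · refine isHarmonicOn_congr hU (fun p hp => ?_) k1
    have hz : mC p ∈ V := by simpa [hVdef] using hp
    have hnz : (pdx η p) * (pdx η p) + (pdy η p) * (pdy η p) ≠ 0 := by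
      have := hgrad p hp; nlinarith
    rw [hH, hgη, hgζ]
    simp only [Complex.div_re, Complex.normSq_apply, mC_apply, eC_apply, Prod.mk.eta]
    ring
  · refine isHarmonicOn_congr hU (fun p hp => ?_) k2
    have hnz : (pdx η p) * (pdx η p) + (pdy η p) * (pdy η p) ≠ 0 := by
      have := hgrad p hp; nlinarith
    rw [hH, hgη, hgζ]
    simp only [Complex.neg_im, Complex.div_im, Complex.normSq_apply, mC_apply, eC_apply,
      Prod.mk.eta]
    ring
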